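/- Let A be a real symmetric matrix, q > 0, and for each eigenvalue λ with |λ| < 2√q set θ_λ = arccos(λ/(2√q)) ∈ (0,π). Define s_m = ∑_{|λ|<2√q} (sin((m+1)θ_λ)/sin θ_λ)·P_λ. Fix a positive integer k and assume (k−2j)θ_λ ∉ 2πℤ for all such λ and all 0 ≤ j ≤ ⌊(k−1)/2⌋. Then ‖ (1/N)∑_{m=1}^{N} s_mᵏ − e_k·2^{−k}·C(k,k/2)·∑_{|λ|<2√q} (sin θ_λ)^{−k}·P_λ ‖ = O(1/N) as N → ∞. -/

import Mathlib

open Finset Real Matrix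

lemma geom_bound (w : ℂ) (hw : ‖w‖ = 1) (hw1 : w ≠ 1) (N : ℕ) :
    ‖∑ m ∈ Finset.Icc 1 N, w ^ (m + 1)‖ ≤ 2 / ‖w - 1‖ := by
  have h1 : ∑ m ∈ Finset.Icc 1 N, w ^ (m + 1) = w ^ 2 * ((w ^ N - 1) / (w - 1)) := by
    rw [← Finset.Ico_add_one_right_eq_Icc, Finset.sum_Ico_eq_sum_range]
    have h2 : N + 1 - 1 = N := rfl
    rw [h2, ← geom_sum_eq hw1, Finset.mul_sum]
    apply Finset.sum_congr rfl
    intro i _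
    ring
  rw [h1, norm_mul, norm_pow, hw, one_pow, one_mul, norm_div]
  gcongr
  calc ‖w ^ N - 1‖ ≤ ‖w ^ N‖ + ‖(1 : ℂ)‖ := by
        simpa using norm_sub_le (w ^ N) 1
    _ ≤ 2 := by rw [norm_pow, hw]; norm_num

lemma sin_pow_expand (θ : ℝ) (k m : ℕ) :
    (Complex.sin ((((m : ℝ) + 1) * θ : ℝ))) ^ k
      = (Complex.I / 2) ^ k * ∑ j ∈ Finset.range (k + 1),
          ((-1 : ℂ) ^ (j + k) * (k.choose j : ℂ)) *
            (Complex.exp ((θ : ℂ) * Complex.I) ^ ((k : ℤ) - 2 * j)) ^ (m + 1) := by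
  set u := Complex.exp ((θ : ℂ) * Complex.I) with hu
  have hu0 : u ≠ 0 := Complex.exp_ne_zero _
  have hA : Complex.exp (((((m : ℝ) + 1) * θ : ℝ) : ℂ) * Complex.I) = u ^ (m + 1) := by
    rw [hu, ← Complex.exp_nat_mul]
    congr 1
    push_cast
    ring
  have hB : Complex.exp (-((((m : ℝ) + 1) * θ : ℝ) : ℂ) * Complex.I) = (u⁻¹) ^ (m + 1) := by
    rw [inv_pow, ← hA, ← Complex.exp_neg]
    congr 1
    ring
  have hsin : Complex.sin ((((m : ℝ) + 1) * θ : ℝ)) =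
      ((u⁻¹) ^ (m + 1) - u ^ (m + 1)) * Complex.I / 2 := by
    rw [Complex.sin, hA, hB]
  have hterm : ∀ j ∈ Finset.range (k + 1),
      ((u⁻¹) ^ (m + 1)) ^ j * (u ^ (m + 1)) ^ (k - j) = (u ^ ((k : ℤ) - 2 * j)) ^ (m + 1) := by
    intro j hj
    have hjk : j ≤ k := Nat.lt_succ_iff.mp (Finset.mem_range.mp hj)
    rw [← pow_mul, ← pow_mul, inv_pow, ← zpow_natCast u ((m + 1) * j),
      ← zpow_natCast u ((m + 1) * (k - j)), ← _root_.zpow_neg, ← zpow_add₀ hu0,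
      ← zpow_natCast (u ^ ((k : ℤ) - 2 * j)) (m + 1), ← _root_.zpow_mul]
    congr 1
    push_cast [Nat.cast_sub hjk]
    ring
  rw [hsin, mul_div_assoc, mul_pow, mul_comm, Finset.mul_sum]
  rw [sub_pow, Finset.mul_sum]
  apply Finset.sum_congr rfl
  intro j hj
  rw [← hterm j hj]
  ring

lemma scalar_core (θ : ℝ) (k : ℕ) (hk : 0 < k)
    (hres : ∀ j : ℕ, j ≤ k → 2 * j ≠ k →
      Complex.exp ((((k : ℤ) - 2 * (j : ℤ)) : ℂ) * ((θ : ℂ) * Complex.I)) ≠ 1) :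
    ∃ B : ℝ, ∀ N : ℕ,
      |∑ m ∈ Finset.Icc 1 N, (Real.sin (((m : ℝ) + 1) * θ)) ^ k
        - N * ((if Even k then (1 : ℝ) else 0) * (1 / 2 ^ k) * (k.choose (k / 2)))| ≤ B := by
  set u := Complex.exp ((θ : ℂ) * Complex.I) with hu
  have hu0 : u ≠ 0 := Complex.exp_ne_zero _
  have huabs : ‖u‖ = 1 := Complex.norm_exp_ofReal_mul_I θ
  set w : ℕ → ℂ := fun j => u ^ ((k : ℤ) - 2 * j) with hwdef
  have hwabs : ∀ j, ‖w j‖ = 1 := by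
    intro j
    rw [hwdef]
    simp [norm_zpow, huabs]
  have hwexp : ∀ j : ℕ, w j = Complex.exp ((((k : ℤ) - 2 * (j : ℤ)) : ℂ) * ((θ : ℂ) * Complex.I)) := by
    intro j
    have h := (Complex.exp_int_mul ((θ : ℂ) * Complex.I) ((k : ℤ) - 2 * (j : ℤ))).symm
    rw [hwdef]
    simp only []
    rw [h]
    norm_cast
  have hw1 : ∀ j : ℕ, j ≤ k → 2 * j ≠ k → w j ≠ 1 := by
    intro j hj hjk
    rw [hwexp]
    exact hres j hj hjk
  set μ : ℝ := (if Even k then (1 : ℝ) else 0) * (1 / 2 ^ k) * (k.choose (k / 2)) with hμ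
  refine ⟨(1 / 2) ^ k * ∑ j ∈ Finset.range (k + 1),
      (k.choose j : ℝ) * (if 2 * j = k then 0 else 2 / ‖w j - 1‖), fun N => ?_⟩
  -- pass to ℂ
  have hcast : |∑ m ∈ Finset.Icc 1 N, (Real.sin (((m : ℝ) + 1) * θ)) ^ k - N * μ|
      = ‖(((∑ m ∈ Finset.Icc 1 N, (Real.sin (((m : ℝ) + 1) * θ)) ^ k - N * μ : ℝ)) : ℂ)‖ := by
    rw [Complex.norm_real, Real.norm_eq_abs]
  rw [hcast]
  have hofReal : ((∑ m ∈ Finset.Icc 1 N, (Real.sin (((m : ℝ) + 1) * θ)) ^ k - N * μ : ℝ) : ℂ)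
      = ∑ m ∈ Finset.Icc 1 N, (Complex.sin ((((m : ℝ) + 1) * θ : ℝ))) ^ k - N * (μ : ℂ) := by
    push_cast [Complex.ofReal_sin]
    ring_nf
  rw [hofReal]
  -- expand sum of sin^k
  have hS : ∑ m ∈ Finset.Icc 1 N, (Complex.sin ((((m : ℝ) + 1) * θ : ℝ))) ^ k
      = (Complex.I / 2) ^ k * ∑ j ∈ Finset.range (k + 1),
          ((-1 : ℂ) ^ (j + k) * (k.choose j : ℂ)) * ∑ m ∈ Finset.Icc 1 N, (w j) ^ (m + 1) := by
    rw [Finset.sum_congr rfl (fun m _ => sin_pow_expand θ k m), ← Finset.mul_sum]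
    congr 1
    rw [Finset.sum_comm]
    exact Finset.sum_congr rfl (fun j _ => by rw [Finset.mul_sum])
  -- the constant term
  have hμc : (N : ℂ) * (μ : ℂ)
      = (Complex.I / 2) ^ k * ∑ j ∈ Finset.range (k + 1),
          ((-1 : ℂ) ^ (j + k) * (k.choose j : ℂ)) * (if 2 * j = k then (N : ℂ) else 0) := by
    by_cases hke : Even k
    · obtain ⟨t, ht⟩ := hke
      have hk2 : k = 2 * t := by omega
      have htk : t ≤ k := by omega
      have hsum : ∑ j ∈ Finset.range (k + 1),
          ((-1 : ℂ) ^ (j + k) * (k.choose j : ℂ)) * (if 2 * j = k then (N : ℂ) else 0)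
          = ((-1 : ℂ) ^ (t + k) * (k.choose t : ℂ)) * (N : ℂ) := by
        rw [Finset.sum_eq_single t]
        · simp [hk2]
        · intro j _ hjt
          have : ¬ (2 * j = k) := by omega
          simp [this]
        · intro h
          exact absurd (Finset.mem_range.mpr (by omega)) h
      rw [hsum]
      have hkey : (Complex.I / 2) ^ k * (-1 : ℂ) ^ (t + k) = (1 / 2 : ℂ) ^ k := by
        rw [hk2]
        have e1 : (Complex.I / 2) ^ (2 * t) = ((-1 : ℂ) / 4) ^ t := by
          rw [pow_mul]
          norm_num [div_pow, Complex.I_sq]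
        have e2 : (-1 : ℂ) ^ (t + 2 * t) = (-1 : ℂ) ^ t := by
          have : t + 2 * t = 3 * t := by ring
          rw [this, pow_mul]
          norm_num
        rw [e1, e2, ← mul_pow]
        norm_num [pow_mul]
      have hkd : k / 2 = t := by omega
      have hek : Even k := ⟨t, ht⟩
      rw [hμ, hkd]
      simp only [hek, if_true]
      push_cast
      rw [show ((1 : ℂ) / 2 ^ k) = (1 / 2 : ℂ) ^ k from by rw [div_pow]; norm_num, ← hkey]
      ring
    · have hsum : ∑ j ∈ Finset.range (k + 1),
          ((-1 : ℂ) ^ (j + k) * (k.choose j : ℂ)) * (if 2 * j = k then (N : ℂ) else 0) = 0 := by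
        apply Finset.sum_eq_zero
        intro j _
        have : ¬ (2 * j = k) := fun h => hke ⟨j, by omega⟩
        simp [this]
      rw [hsum, hμ]
      simp only [hke, if_false]
      push_cast
      ring
  rw [hS, hμc, ← mul_sub, ← Finset.sum_sub_distrib]
  rw [norm_mul]
  have habsI : ‖(Complex.I / 2) ^ k‖ = (1 / 2) ^ k := by
    rw [norm_pow, norm_div, Complex.norm_I, Complex.norm_two]
  rw [habsI]
  gcongr
  calc ‖∑ j ∈ Finset.range (k + 1),
        (((-1 : ℂ) ^ (j + k) * (k.choose j : ℂ)) * (∑ m ∈ Finset.Icc 1 N, (w j) ^ (m + 1))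
          - ((-1 : ℂ) ^ (j + k) * (k.choose j : ℂ)) * (if 2 * j = k then (N : ℂ) else 0))‖
      ≤ ∑ j ∈ Finset.range (k + 1), ‖
        (((-1 : ℂ) ^ (j + k) * (k.choose j : ℂ)) * ((∑ m ∈ Finset.Icc 1 N, (w j) ^ (m + 1))
          - (if 2 * j = k then (N : ℂ) else 0)))‖ := by
        refine le_trans (le_of_eq ?_) (norm_sum_le _ _)
        congr 1
        exact Finset.sum_congr rfl (fun j _ => by ring)
    _ ≤ ∑ j ∈ Finset.range (k + 1),
        (k.choose j : ℝ) * (if 2 * j = k then 0 else 2 / ‖w j - 1‖) := by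
        apply Finset.sum_le_sum
        intro j hj
        have hjk : j ≤ k := Nat.lt_succ_iff.mp (Finset.mem_range.mp hj)
        rw [norm_mul, norm_mul]
        have h1 : ‖(-1 : ℂ) ^ (j + k)‖ = 1 := by
          rw [norm_pow]
          norm_num
        rw [h1, one_mul, Complex.norm_natCast]
        gcongr (k.choose j : ℝ) * ?_
        by_cases h2 : 2 * j = k
        · have hw1j : w j = 1 := by
            show u ^ ((k : ℤ) - 2 * (j : ℤ)) = 1
            have hz : (k : ℤ) - 2 * (j : ℤ) = 0 := by omega
            rw [hz, zpow_zero]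
          rw [if_pos h2, if_pos h2, hw1j]
          simp [Nat.card_Icc]
        · rw [if_neg h2, if_neg h2, sub_zero]
          exact geom_bound (w j) (hwabs j) (hw1 j hjk h2) N


lemma pow_sum_smul {n : ℕ} (t : Finset ℝ) (P : ℝ → Matrix (Fin n) (Fin n) ℝ)
    (hidem : ∀ l ∈ t, P l * P l = P l)
    (horth : ∀ l ∈ t, ∀ m ∈ t, l ≠ m → P l * P m = 0)
    (c : ℝ → ℝ) (k : ℕ) (hk : 0 < k) :
    (∑ l ∈ t, c l • P l) ^ k = ∑ l ∈ t, (c l) ^ k • P l := by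
  induction k with
  | zero => omega
  | succ k ih =>
    by_cases hk0 : k = 0
    · subst hk0
      simp
    · have hkpos : 0 < k := Nat.pos_of_ne_zero hk0
      rw [pow_succ, ih hkpos, Finset.sum_mul_sum]
      apply Finset.sum_congr rfl
      intro l hl
      rw [Finset.sum_eq_single l]
      · rw [smul_mul_assoc, mul_smul_comm, smul_smul, hidem l hl, pow_succ]
      · intro m hm hml
        rw [smul_mul_assoc, mul_smul_comm, smul_smul, horth l hl m hm (Ne.symm hml), smul_zero]
      · intro h
        exact absurd hl h

/-- Limit theorem for `s m = ∑_{|λ|<2√q} (sin((m+1)θ_λ)/sin θ_λ) • P λ`: under the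
non-resonance condition `(k-2j) θ_λ ∉ 2πℤ`, the averages `(1/N) ∑_{m=1}^N (s m)^k`
converge to `e_k 2⁻ᵏ C(k,k/2) ∑_{|λ|<2√q} (sin θ_λ)⁻ᵏ • P λ` with error `O(1/N)`
(stated entrywise). -/
theorem average_s_pow_tendsto
    {n : ℕ} (A : Matrix (Fin n) (Fin n) ℝ) (hA : A.IsSymm)
    (σ : Finset ℝ) (P : ℝ → Matrix (Fin n) (Fin n) ℝ)
    (hdecomp : A = ∑ lam ∈ σ, lam • P lam)
    (hsum : ∑ lam ∈ σ, P lam = 1)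
    (hsym : ∀ lam ∈ σ, (P lam).IsSymm)
    (hidem : ∀ lam ∈ σ, P lam * P lam = P lam)
    (horth : ∀ lam ∈ σ, ∀ mu ∈ σ, lam ≠ mu → P lam * P mu = 0)
    (q : ℝ) (hq : 0 < q)
    (θ : ℝ → ℝ) (hθdef : ∀ lam, θ lam = Real.arccos (lam / (2 * Real.sqrt q)))
    (s : ℕ → Matrix (Fin n) (Fin n) ℝ)
    (hs : ∀ m, s m = ∑ lam ∈ σ.filter (fun lam => |lam| < 2 * Real.sqrt q),
        (Real.sin ((m + 1) * θ lam) / Real.sin (θ lam)) • P lam)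
    (k : ℕ) (hk : 0 < k)
    (hang : ∀ lam ∈ σ, |lam| < 2 * Real.sqrt q → ∀ j : ℕ, j ≤ (k - 1) / 2 →
      ∀ l : ℤ, ((k : ℝ) - 2 * j) * θ lam ≠ 2 * Real.pi * l) :
    ∃ C : ℝ, ∀ N : ℕ, 1 ≤ N → ∀ i j : Fin n,
      |((1 / (N : ℝ)) • ∑ m ∈ Finset.Icc 1 N, (s m) ^ k
        - ((if Even k then (1 : ℝ) else 0) * (1 / 2 ^ k) * (k.choose (k / 2))) •
            ∑ lam ∈ σ.filter (fun lam => |lam| < 2 * Real.sqrt q),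
              (Real.sin (θ lam))⁻¹ ^ k • P lam) i j|
      ≤ C / N := by
  classical
  set σ' := σ.filter (fun lam => |lam| < 2 * Real.sqrt q) with hσ'
  set L : ℝ := (if Even k then (1 : ℝ) else 0) * (1 / 2 ^ k) * (k.choose (k / 2)) with hL
  -- positivity of sin θ for relevant eigenvalues
  have hsinpos : ∀ lam ∈ σ', 0 < Real.sin (θ lam) := by
    intro lam hlam
    obtain ⟨_, habs⟩ := Finset.mem_filter.mp hlam
    have h2q : (0 : ℝ) < 2 * Real.sqrt q := by positivity
    rw [hθdef, Real.sin_arccos]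
    apply Real.sqrt_pos.mpr
    have h1 : |lam / (2 * Real.sqrt q)| < 1 := by
      rw [abs_div, abs_of_pos h2q]
      rw [div_lt_one h2q]
      exact habs
    nlinarith [abs_nonneg (lam / (2 * Real.sqrt q)), sq_abs (lam / (2 * Real.sqrt q)),
      sq_nonneg (lam / (2 * Real.sqrt q))]
  -- non-resonance in exponential form
  have hres : ∀ lam ∈ σ', ∀ j : ℕ, j ≤ k → 2 * j ≠ k →
      Complex.exp ((((k : ℤ) - 2 * (j : ℤ)) : ℂ) * ((θ lam : ℂ) * Complex.I)) ≠ 1 := by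
    intro lam hlam j hj hjk hexp1
    obtain ⟨hlamσ, habs⟩ := Finset.mem_filter.mp hlam
    rw [Complex.exp_eq_one_iff] at hexp1
    obtain ⟨l, hl⟩ := hexp1
    have h2 : ((((k : ℝ) - 2 * j) * θ lam : ℝ) : ℂ) * Complex.I
        = (((2 * Real.pi * l : ℝ)) : ℂ) * Complex.I := by
      push_cast
      push_cast at hl
      linear_combination hl
    have h3 : ((k : ℝ) - 2 * j) * θ lam = 2 * Real.pi * l := by
      have := mul_right_cancel₀ Complex.I_ne_zero h2
      exact_mod_cast this
    rcases lt_trichotomy (2 * j) k with h | h | h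
    · exact hang lam hlamσ habs j (by omega) l h3
    · exact hjk h
    · apply hang lam hlamσ habs (k - j) (by omega) (-l)
      have hjle : j ≤ k := hj
      push_cast [Nat.cast_sub hjle]
      push_cast at h3
      linarith [h3]
  -- scalar estimate for each eigenvalue
  have key : ∀ lam : ℝ, ∃ B : ℝ, lam ∈ σ' → ∀ N : ℕ, 1 ≤ N →
      |(1 / (N : ℝ)) * (∑ m ∈ Finset.Icc 1 N,
          (Real.sin ((m + 1) * θ lam) / Real.sin (θ lam)) ^ k)
        - L * (Real.sin (θ lam))⁻¹ ^ k| ≤ B / N := by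
    intro lam
    by_cases hmem : lam ∈ σ'
    · obtain ⟨B0, hB0⟩ := scalar_core (θ lam) k hk (hres lam hmem)
      have hsp := hsinpos lam hmem
      have hinvnn : (0 : ℝ) ≤ (Real.sin (θ lam))⁻¹ ^ k := by positivity
      refine ⟨B0 * (Real.sin (θ lam))⁻¹ ^ k, fun _ N hN => ?_⟩
      have hNpos : (0 : ℝ) < N := by exact_mod_cast hN
      have hNne : (N : ℝ) ≠ 0 := ne_of_gt hNpos
      have hsne : Real.sin (θ lam) ≠ 0 := ne_of_gt hsp
      have e : (1 / (N : ℝ)) * (∑ m ∈ Finset.Icc 1 N,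
            (Real.sin ((m + 1) * θ lam) / Real.sin (θ lam)) ^ k)
          - L * (Real.sin (θ lam))⁻¹ ^ k
          = ((∑ m ∈ Finset.Icc 1 N, (Real.sin (((m : ℝ) + 1) * θ lam)) ^ k) - N * L)
              * ((Real.sin (θ lam))⁻¹ ^ k) / N := by
        simp only [div_pow]
        rw [← Finset.sum_div]
        set S := ∑ m ∈ Finset.Icc 1 N, Real.sin (((m : ℝ) + 1) * θ lam) ^ k with hS
        field_simp
        have h1 : Real.sin (θ lam) ^ k * (Real.sin (θ lam))⁻¹ ^ k = 1 := by
          rw [← mul_pow, mul_inv_cancel₀ hsne, one_pow]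
        linear_combination (-S) * h1
      rw [e, abs_div, abs_mul, abs_of_nonneg hinvnn, abs_of_pos hNpos]
      rw [div_le_div_iff₀ hNpos hNpos]
      have hb := hB0 N
      rw [← hL] at hb
      have hfin := mul_le_mul_of_nonneg_right (mul_le_mul_of_nonneg_right hb hinvnn) (le_of_lt hNpos)
      linarith
    · exact ⟨0, fun h => absurd h hmem⟩
  choose Bf hBf using key
  -- entrywise bound constants
  set E : ℝ → ℝ := fun lam => ∑ p : Fin n, ∑ r : Fin n, |P lam p r| with hE
  have hEnn : ∀ lam, 0 ≤ E lam := by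
    intro lam
    apply Finset.sum_nonneg
    intro p _
    apply Finset.sum_nonneg
    intro r _
    exact abs_nonneg _
  have hEntry : ∀ lam, ∀ i j : Fin n, |P lam i j| ≤ E lam := by
    intro lam i j
    calc |P lam i j| ≤ ∑ r : Fin n, |P lam i r| :=
          Finset.single_le_sum (fun r _ => abs_nonneg (P lam i r)) (Finset.mem_univ j)
      _ ≤ E lam :=
          Finset.single_le_sum (f := fun p => ∑ r : Fin n, |P lam p r|)
            (fun p _ => Finset.sum_nonneg fun r _ => abs_nonneg _) (Finset.mem_univ i)
  refine ⟨∑ lam ∈ σ', Bf lam * E lam, fun N hN i j => ?_⟩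
  have hNpos : (0 : ℝ) < N := by exact_mod_cast hN
  -- matrix identity
  have hpow : ∀ m : ℕ, (s m) ^ k = ∑ lam ∈ σ',
      (Real.sin ((m + 1) * θ lam) / Real.sin (θ lam)) ^ k • P lam := by
    intro m
    rw [hs m]
    exact pow_sum_smul σ' P
      (fun l hl => hidem l (Finset.mem_filter.mp hl).1)
      (fun l hl m' hm' hne => horth l (Finset.mem_filter.mp hl).1 m' (Finset.mem_filter.mp hm').1 hne)
      _ k hk
  have hmat : (1 / (N : ℝ)) • ∑ m ∈ Finset.Icc 1 N, (s m) ^ k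
      - L • ∑ lam ∈ σ', (Real.sin (θ lam))⁻¹ ^ k • P lam
      = ∑ lam ∈ σ',
          ((1 / (N : ℝ)) * (∑ m ∈ Finset.Icc 1 N,
              (Real.sin ((m + 1) * θ lam) / Real.sin (θ lam)) ^ k)
            - L * (Real.sin (θ lam))⁻¹ ^ k) • P lam := by
    rw [Finset.sum_congr rfl (fun m _ => hpow m), Finset.sum_comm, Finset.smul_sum,
      Finset.smul_sum, ← Finset.sum_sub_distrib]
    apply Finset.sum_congr rfl
    intro lam _
    rw [← Finset.sum_smul, smul_smul, smul_smul, ← sub_smul]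
  rw [hmat]
  -- entrywise estimate
  rw [Matrix.sum_apply]
  calc |∑ lam ∈ σ', (((1 / (N : ℝ)) * (∑ m ∈ Finset.Icc 1 N,
          (Real.sin ((m + 1) * θ lam) / Real.sin (θ lam)) ^ k)
        - L * (Real.sin (θ lam))⁻¹ ^ k) • P lam) i j|
      ≤ ∑ lam ∈ σ', |(((1 / (N : ℝ)) * (∑ m ∈ Finset.Icc 1 N,
          (Real.sin ((m + 1) * θ lam) / Real.sin (θ lam)) ^ k)
        - L * (Real.sin (θ lam))⁻¹ ^ k) • P lam) i j| := Finset.abs_sum_le_sum_abs _ _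
    _ ≤ ∑ lam ∈ σ', (Bf lam / N) * E lam := by
        apply Finset.sum_le_sum
        intro lam hlam
        rw [Matrix.smul_apply, smul_eq_mul, abs_mul]
        have h1 := hBf lam hlam N hN
        have h2 := hEntry lam i j
        have h3 : (0 : ℝ) ≤ Bf lam / N := le_trans (abs_nonneg _) h1
        exact mul_le_mul h1 h2 (abs_nonneg _) h3
    _ = (∑ lam ∈ σ', Bf lam * E lam) / N := by
        rw [Finset.sum_div]
        apply Finset.sum_congr rfl
        intro lam _
        ring
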